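/- (Theorem 3) If the roll dynamics satisfy φ''(t) = (θ'(t)·ψ'(t)·(I_y − I_z) + τ(t))/I_x, where the control torque is τ = τ_eq + τ_sw with τ_eq = I_x·(v' − γ(φ' − ᵈφ')) − θ'ψ'(I_y − I_z) and τ_sw = −I_x·(c₁·sg(s) + c₂·s), then the Lyapunov function V(t) = (1/2)s(t)² has derivative V'(t) = −c₁·s(t)·sg(s(t)) − c₂·s(t)², and V'(t) ≤ 0 for all t; hence the roll angle control system is Lyapunov stable. -/

import Mathlib

/-- The saturated sign function with parameter `ε`. -/
noncomputable def sg (ε x : ℝ) : ℝ :=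
  if x > ε then 1 else if x < -ε then -1 else x / ε

lemma sg_mul_nonneg {ε : ℝ} (hε : 0 < ε) (x : ℝ) : 0 ≤ x * sg ε x := by
  unfold sg
  split_ifs with h1 h2
  · nlinarith
  · nlinarith
  · rw [← mul_div_assoc]
    exact div_nonneg (mul_self_nonneg x) hε.le

/-- Theorem 3: under the roll-torque law `τ = τ_eq + τ_sw`, the Lyapunov
function `V = (1/2)s²` has derivative `−c₁·s·sg(s) − c₂·s² ≤ 0`; the roll
angle control system is Lyapunov stable. -/
theorem roll_controller_stable
    (ε lam γ c₁ c₂ Ix Iy Iz : ℝ) (hε0 : 0 < ε) (hε1 : ε < 1)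
    (hlam : 0 < lam) (hγ : 0 < γ) (hc₁ : 0 < c₁) (hc₂ : 0 < c₂) (hIx : Ix ≠ 0)
    (φ dφ θ ψ : ℝ → ℝ)
    (hφ : Differentiable ℝ φ) (hφ' : Differentiable ℝ (deriv φ))
    (hdφ : Differentiable ℝ dφ) (hdφ' : Differentiable ℝ (deriv dφ))
    (hθ : Differentiable ℝ θ) (hθ' : Differentiable ℝ (deriv θ))
    (hψ : Differentiable ℝ ψ) (hψ' : Differentiable ℝ (deriv ψ))
    (e v s tau : ℝ → ℝ)
    (he : e = fun t => φ t - dφ t)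
    (hv : v = fun t => deriv dφ t - lam * e t)
    (hs : s = fun t => γ * e t + (deriv φ t - v t))
    (htau : ∀ t, tau t
        = (Ix * (deriv v t - γ * (deriv φ t - deriv dφ t))
            - deriv θ t * deriv ψ t * (Iy - Iz))
          + (-(Ix * (c₁ * sg ε (s t) + c₂ * s t))))
    (hdyn : ∀ t, deriv (deriv φ) t
        = (deriv θ t * deriv ψ t * (Iy - Iz) + tau t) / Ix) :
    ∀ t, HasDerivAt (fun r => (1 / 2 : ℝ) * s r ^ 2)
        (-(c₁ * s t * sg ε (s t)) - c₂ * s t ^ 2) t ∧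
      -(c₁ * s t * sg ε (s t)) - c₂ * s t ^ 2 ≤ 0 := by
  intro t
  -- derivative of v
  have hvder : ∀ r, deriv v r = deriv (deriv dφ) r - lam * (deriv φ r - deriv dφ r) := by
    intro r
    have h1 : HasDerivAt v (deriv (deriv dφ) r - lam * (deriv φ r - deriv dφ r)) r := by
      rw [hv, he]
      exact ((hdφ' r).hasDerivAt.sub
        (((hφ r).hasDerivAt.sub (hdφ r).hasDerivAt).const_mul lam))
    exact h1.deriv
  -- derivative of s
  have hsder : HasDerivAt s (-(c₁ * sg ε (s t)) - c₂ * s t) t := by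
    have hSder : HasDerivAt s
        (γ * (deriv φ t - deriv dφ t)
          + (deriv (deriv φ) t - (deriv (deriv dφ) t - lam * (deriv φ t - deriv dφ t)))) t := by
      rw [hs, hv, he]
      exact ((((hφ t).hasDerivAt.sub (hdφ t).hasDerivAt).const_mul γ).add
        ((hφ' t).hasDerivAt.sub ((hdφ' t).hasDerivAt.sub
          (((hφ t).hasDerivAt.sub (hdφ t).hasDerivAt).const_mul lam))))
    convert hSder using 1
    have h2 := hdyn t
    rw [htau t, hvder t] at h2
    field_simp at h2
    have h3 : deriv (deriv φ) t
        = deriv (deriv dφ) t - lam * (deriv φ t - deriv dφ t) - γ * (deriv φ t - deriv dφ t)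
          - (c₁ * sg ε (s t) + c₂ * s t) := by
      apply mul_right_cancel₀ hIx
      rw [h2]; ring
    rw [h3]; ring
  constructor
  · have := hsder.const_mul ((1:ℝ)/2) |>.pow 2
    have h : HasDerivAt (fun r => (1 / 2 : ℝ) * s r ^ 2) ((1 / 2 : ℝ) * ((2 : ℕ) * s t ^ (2 - 1) * (-(c₁ * sg ε (s t)) - c₂ * s t))) t := ((hsder.pow 2).const_mul ((1:ℝ)/2))
    convert h using 1
    ring
  · have h1 := sg_mul_nonneg hε0 (s t)
    nlinarith [sq_nonneg (s t)]
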